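/- Let p be a prime number and let s ∈ ℂ with Re(s) > -1. Then ∫_{ℤ_p^×} |1 - x|_p^s dμ(x) = p^{-1-s}·(1 - p^{-1})/(1 - p^{-1-s}) + p^{-1}(p - 2). -/

import Mathlib

open MeasureTheory Complex
open scoped ENNReal

section Aux
variable (p : ℕ) [Fact p.Prime]

private def PBall (n : ℕ) : Set ℚ_[p] := {x | ‖x‖ ≤ (p:ℝ) ^ (-(n:ℤ))}
private def PSph (n : ℕ) : Set ℚ_[p] := {x | ‖x‖ = (p:ℝ) ^ (-(n:ℤ))}

private lemma hp1 : 1 < (p:ℝ) := by exact_mod_cast (Fact.out : p.Prime).one_lt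

private lemma hppos : (0:ℝ) < (p:ℝ) := lt_trans one_pos (hp1 p)

variable [MeasurableSpace ℚ_[p]] [BorelSpace ℚ_[p]]

private lemma measurableSet_PBall (n : ℕ) : MeasurableSet (PBall p n) :=
  (isClosed_le continuous_norm continuous_const).measurableSet

private lemma measurableSet_PSph (n : ℕ) : MeasurableSet (PSph p n) :=
  (isClosed_eq continuous_norm continuous_const).measurableSet

private lemma pball_partition (n : ℕ) :
    PBall p n = ⋃ a : Fin p,
      {x : ℚ_[p] | ‖x - ((a : ℕ) : ℚ_[p]) * (p:ℚ_[p])^n‖ ≤ (p:ℝ) ^ (-((n+1 : ℕ) : ℤ))} := by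
  have hp0 : (p:ℚ_[p]) ≠ 0 := by
    exact_mod_cast (Nat.cast_ne_zero (R := ℚ_[p])).2 (Fact.out : p.Prime).ne_zero
  ext x
  constructor
  · intro hx
    have hznorm : ‖x * (p:ℚ_[p]) ^ (-(n:ℤ))‖ ≤ 1 := by
      rw [norm_mul, Padic.norm_p_zpow, neg_neg]
      calc ‖x‖ * (p:ℝ) ^ (n:ℤ) ≤ (p:ℝ) ^ (-(n:ℤ)) * (p:ℝ) ^ (n:ℤ) := by
            apply mul_le_mul_of_nonneg_right hx (zpow_nonneg (by positivity) _)
        _ = 1 := by rw [← zpow_add₀ (hppos p).ne']; simp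
    set z : ℤ_[p] := ⟨x * (p:ℚ_[p]) ^ (-(n:ℤ)), hznorm⟩ with hz
    have ha_lt : z.appr 1 < p := by simpa using z.appr_lt 1
    have ha_spec : ‖z - (z.appr 1 : ℤ_[p])‖ ≤ (p:ℝ) ^ (-(1:ℕ):ℤ) := by
      rw [PadicInt.norm_le_pow_iff_mem_span_pow]
      simpa using z.appr_spec 1
    refine Set.mem_iUnion.2 ⟨⟨z.appr 1, ha_lt⟩, ?_⟩
    show ‖x - ((z.appr 1 : ℕ) : ℚ_[p]) * (p:ℚ_[p])^n‖ ≤ (p:ℝ) ^ (-((n+1:ℕ):ℤ))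
    have hzv : (z : ℚ_[p]) = x * (p:ℚ_[p]) ^ (-(n:ℤ)) := rfl
    have hxz : x = ((z : ℚ_[p])) * (p:ℚ_[p])^n := by
      rw [hzv, mul_assoc, ← zpow_natCast (p:ℚ_[p]) n, ← zpow_add₀ hp0]
      simp
    have hcast : ((z - (z.appr 1 : ℤ_[p]) : ℤ_[p]) : ℚ_[p])
        = (z : ℚ_[p]) - ((z.appr 1 : ℕ) : ℚ_[p]) := by push_cast; ring
    have key : x - ((z.appr 1 : ℕ) : ℚ_[p]) * (p:ℚ_[p])^n
        = ((z - (z.appr 1 : ℤ_[p]) : ℤ_[p]) : ℚ_[p]) * (p:ℚ_[p])^n := by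
      rw [hcast, sub_mul, ← hxz]
    rw [key, norm_mul]
    have h1 : ‖((z - (z.appr 1 : ℤ_[p]) : ℤ_[p]) : ℚ_[p])‖ ≤ (p:ℝ)^(-(1:ℕ):ℤ) := by
      rw [PadicInt.padic_norm_e_of_padicInt]; exact ha_spec
    have h2 : ‖(p:ℚ_[p])^n‖ = (p:ℝ)^(-(n:ℤ)) := by
      rw [← zpow_natCast (p:ℚ_[p]) n, Padic.norm_p_zpow]
    rw [h2]
    calc ‖((z - (z.appr 1 : ℤ_[p]) : ℤ_[p]) : ℚ_[p])‖ * (p:ℝ)^(-(n:ℤ))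
        ≤ (p:ℝ)^(-(1:ℕ):ℤ) * (p:ℝ)^(-(n:ℤ)) :=
          mul_le_mul_of_nonneg_right h1 (zpow_nonneg (by positivity) _)
      _ = (p:ℝ) ^ (-((n+1:ℕ):ℤ)) := by
          rw [← zpow_add₀ (hppos p).ne']; congr 1; push_cast; ring
  · intro hx
    obtain ⟨a, ha⟩ := Set.mem_iUnion.1 hx
    have hc : ‖((a : ℕ) : ℚ_[p]) * (p:ℚ_[p])^n‖ ≤ (p:ℝ) ^ (-(n:ℤ)) := by
      rw [norm_mul, ← zpow_natCast (p:ℚ_[p]) n, Padic.norm_p_zpow]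
      calc ‖((a:ℕ) : ℚ_[p])‖ * (p:ℝ)^(-(n:ℤ)) ≤ 1 * (p:ℝ)^(-(n:ℤ)) := by
            apply mul_le_mul_of_nonneg_right _ (zpow_nonneg (by positivity) _)
            exact_mod_cast Padic.norm_int_le_one ((a:ℕ) : ℤ)
        _ = (p:ℝ)^(-(n:ℤ)) := one_mul _
    have hd : ‖x - ((a : ℕ) : ℚ_[p]) * (p:ℚ_[p])^n‖ ≤ (p:ℝ) ^ (-(n:ℤ)) := by
      refine le_trans ha ?_
      refine zpow_le_zpow_right₀ (le_of_lt (hp1 p)) (by push_cast; omega)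
    have := Padic.nonarchimedean (x - ((a : ℕ) : ℚ_[p]) * (p:ℚ_[p])^n)
      (((a : ℕ) : ℚ_[p]) * (p:ℚ_[p])^n)
    simp only [sub_add_cancel] at this
    exact le_trans this (sup_le hd hc)


private lemma pball_disjoint (n : ℕ) :
    Pairwise (Function.onFun Disjoint (fun a : Fin p =>
      {x : ℚ_[p] | ‖x - ((a : ℕ) : ℚ_[p]) * (p:ℚ_[p])^n‖ ≤ (p:ℝ) ^ (-((n+1 : ℕ) : ℤ))})) := by
  intro a b hab
  rw [Function.onFun, Set.disjoint_left]
  rintro x hxa hxb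
  apply hab
  have hsub : (((a:ℕ) : ℚ_[p]) - ((b:ℕ) : ℚ_[p])) * (p:ℚ_[p])^n
      = (x - ((b:ℕ) : ℚ_[p]) * (p:ℚ_[p])^n) - (x - ((a:ℕ) : ℚ_[p]) * (p:ℚ_[p])^n) := by ring
  have hnorm : ‖(((a:ℕ) : ℚ_[p]) - ((b:ℕ) : ℚ_[p])) * (p:ℚ_[p])^n‖ ≤ (p:ℝ) ^ (-((n+1:ℕ):ℤ)) := by
    rw [hsub, sub_eq_add_neg]
    refine le_trans (Padic.nonarchimedean _ _) (sup_le hxb ?_)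
    rw [norm_neg]; exact hxa
  have hpn : ‖(p:ℚ_[p])^n‖ = (p:ℝ)^(-(n:ℤ)) := by
    rw [← zpow_natCast (p:ℚ_[p]) n, Padic.norm_p_zpow]
  rw [norm_mul, hpn] at hnorm
  have hint : ‖(((((a:ℕ):ℤ) - ((b:ℕ):ℤ)) : ℤ) : ℚ_[p])‖ ≤ (p:ℝ) ^ (-(1:ℕ):ℤ) := by
    have hexp : ((p:ℝ) ^ (-((n+1:ℕ):ℤ))) = (p:ℝ)^(-(1:ℕ):ℤ) * (p:ℝ)^(-(n:ℤ)) := by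
      rw [← zpow_add₀ (hppos p).ne']; congr 1; push_cast; ring
    have hppow : (0:ℝ) < (p:ℝ)^(-(n:ℤ)) := zpow_pos (hppos p) _
    have h2 : ‖(((a:ℕ):ℚ_[p]) - ((b:ℕ):ℚ_[p]))‖ * (p:ℝ)^(-(n:ℤ))
        ≤ (p:ℝ)^(-(1:ℕ):ℤ) * (p:ℝ)^(-(n:ℤ)) := by rw [← hexp]; exact hnorm
    have h3 := le_of_mul_le_mul_right h2 hppow
    push_cast
    push_cast at h3
    exact h3
  rw [Padic.norm_int_le_pow_iff_dvd] at hint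
  have hdvd : ((p:ℤ)) ∣ ((a:ℕ):ℤ) - ((b:ℕ):ℤ) := by simpa using hint
  by_contra hne
  have habs : |((a:ℕ):ℤ) - ((b:ℕ):ℤ)| < p := by
    have ha := a.isLt; have hb := b.isLt
    rw [abs_lt]; omega
  have hne0 : ((a:ℕ):ℤ) - ((b:ℕ):ℤ) ≠ 0 := by
    intro h; apply hne; apply Fin.ext; omega
  have hle := Int.le_of_dvd (abs_pos.2 hne0) ((dvd_abs _ _).2 hdvd)
  omega

variable (μ : Measure ℚ_[p]) [μ.IsAddHaarMeasure]

private lemma meas_coset (n : ℕ) (c : ℚ_[p]) :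
    μ {x : ℚ_[p] | ‖x - c‖ ≤ (p:ℝ) ^ (-(n:ℤ))} = μ (PBall p n) := by
  have : {x : ℚ_[p] | ‖x - c‖ ≤ (p:ℝ) ^ (-(n:ℤ))} = (fun h => -c + h) ⁻¹' (PBall p n) := by
    ext x; simp [PBall, neg_add_eq_sub]
  rw [this, measure_preimage_add]

private lemma meas_pball (hμ : μ {x : ℚ_[p] | ‖x‖ ≤ 1} = 1) (n : ℕ) :
    μ (PBall p n) = ((p:ℝ≥0∞))⁻¹ ^ n := by
  have hp0 : ((p:ℝ≥0∞)) ≠ 0 := by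
    simp [Nat.cast_ne_zero]; exact (Fact.out : p.Prime).ne_zero
  have hptop : ((p:ℝ≥0∞)) ≠ ⊤ := ENNReal.natCast_ne_top p
  induction n with
  | zero =>
    have : PBall p 0 = {x : ℚ_[p] | ‖x‖ ≤ 1} := by ext x; simp [PBall]
    rw [this, hμ]; simp
  | succ n ih =>
    have hstep : μ (PBall p n) = (p:ℝ≥0∞) * μ (PBall p (n+1)) := by
      rw [pball_partition p n, measure_iUnion (pball_disjoint p n)
        (fun a => (isClosed_le (continuous_norm.comp (continuous_sub_right _)) continuous_const).measurableSet)]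
      have hc : ∀ a : Fin p,
          μ {x : ℚ_[p] | ‖x - ((a : ℕ) : ℚ_[p]) * (p:ℚ_[p])^n‖ ≤ (p:ℝ) ^ (-((n+1 : ℕ) : ℤ))}
          = μ (PBall p (n+1)) := fun a => meas_coset p μ (n+1) _
      rw [tsum_congr hc, tsum_fintype]
      simp [Finset.sum_const, Finset.card_univ, mul_comm]
    have : μ (PBall p (n+1)) = (p:ℝ≥0∞)⁻¹ * ((p:ℝ≥0∞) * μ (PBall p (n+1))) := by
      rw [← mul_assoc, ENNReal.inv_mul_cancel hp0 hptop, one_mul]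
    rw [this, ← hstep, ih, pow_succ, mul_comm]


private lemma psph_eq (n : ℕ) : PSph p n = PBall p n \ PBall p (n+1) := by
  ext x
  simp only [PSph, PBall, Set.mem_diff, Set.mem_setOf_eq]
  constructor
  · intro h
    refine ⟨le_of_eq h, ?_⟩
    rw [h]; push_cast
    intro hcon
    have := lt_of_le_of_lt hcon (zpow_lt_zpow_right₀ (hp1 p) (by omega : (-((n:ℤ)+1)) < -(n:ℤ)))
    exact lt_irrefl _ this
  · rintro ⟨h1, h2⟩
    rw [Padic.norm_le_pow_iff_norm_lt_pow_add_one] at h2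
    push_neg at h2
    have : (-((n+1:ℕ):ℤ) + 1) = -(n:ℤ) := by push_cast; ring
    rw [this] at h2
    exact le_antisymm h1 h2

private lemma psph_disjoint : Pairwise (Function.onFun Disjoint (PSph p)) := by
  intro m n hmn
  rw [Function.onFun, Set.disjoint_left]
  rintro x hm hn
  apply hmn
  have : (p:ℝ) ^ (-(m:ℤ)) = (p:ℝ) ^ (-(n:ℤ)) := by rw [← hm, ← hn]
  have := zpow_right_injective₀ (hppos p) (ne_of_gt (hp1 p)) this
  omega

private lemma pball_sub (n : ℕ) : PBall p (n+1) ⊆ PBall p n := fun x hx =>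
  le_trans hx (zpow_le_zpow_right₀ (le_of_lt (hp1 p)) (by push_cast; omega))

private lemma pball_zero_diff : PBall p 0 \ {0} = ⋃ n, PSph p n := by
  ext x
  simp only [Set.mem_diff, Set.mem_singleton_iff, Set.mem_iUnion, PBall, PSph, Set.mem_setOf_eq]
  constructor
  · rintro ⟨h1, h2⟩
    have hval := Padic.norm_eq_zpow_neg_valuation h2
    have hvnonneg : 0 ≤ x.valuation := by
      by_contra hneg
      push_neg at hneg
      have : (p:ℝ) ^ (0:ℤ) < (p:ℝ) ^ (-x.valuation) := zpow_lt_zpow_right₀ (hp1 p) (by omega)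
      rw [← hval] at this
      have h1' : ‖x‖ ≤ 1 := by simpa using h1
      simp only [zpow_zero] at this
      linarith
    refine ⟨x.valuation.toNat, ?_⟩
    rw [hval]; congr 1; omega
  · rintro ⟨n, hn⟩
    constructor
    · rw [hn]
      exact zpow_le_zpow_right₀ (le_of_lt (hp1 p)) (by omega)
    · intro h0
      rw [h0, norm_zero] at hn
      have : (0:ℝ) < (p:ℝ) ^ (-(n:ℤ)) := zpow_pos (hppos p) _
      linarith

private lemma measurable_cpow_fn (s : ℂ) :
    Measurable (fun y : ℚ_[p] => ((‖y‖ : ℝ) : ℂ) ^ s) := by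
  have h1 : Measurable fun z : ℂ => z ^ s := by
    have : (fun z : ℂ => z ^ s)
        = fun z => if z = 0 then (if s = 0 then 1 else 0) else Complex.exp (Complex.log z * s) :=
      funext fun z => Complex.cpow_def z s
    rw [this]
    exact Measurable.ite (measurableSet_eq) measurable_const
      ((Complex.measurable_log.mul_const s).cexp)
  exact h1.comp (Complex.measurable_ofReal.comp measurable_norm)


private lemma hpE0 : ((p:ℝ≥0∞)) ≠ 0 := by
  simp only [ne_eq, Nat.cast_eq_zero]; exact (Fact.out : p.Prime).ne_zero

private lemma meas_psph (hμ : μ {x : ℚ_[p] | ‖x‖ ≤ 1} = 1) (n : ℕ) :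
    μ (PSph p n) = ((p:ℝ≥0∞))⁻¹ ^ n - ((p:ℝ≥0∞))⁻¹ ^ (n+1) := by
  rw [psph_eq, measure_diff (pball_sub p n)
    ((measurableSet_PBall p (n+1)).nullMeasurableSet)
    (by rw [meas_pball p μ hμ]
        exact ENNReal.pow_ne_top (ENNReal.inv_ne_top.2 (hpE0 p))),
    meas_pball p μ hμ, meas_pball p μ hμ]

private lemma meas_psph_toReal (hμ : μ {x : ℚ_[p] | ‖x‖ ≤ 1} = 1) (n : ℕ) :
    (μ (PSph p n)).toReal = (p:ℝ)⁻¹ ^ n * (1 - (p:ℝ)⁻¹) := by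
  rw [meas_psph p μ hμ n, ENNReal.toReal_sub_of_le]
  · rw [ENNReal.toReal_pow, ENNReal.toReal_pow, ENNReal.toReal_inv, ENNReal.toReal_natCast]
    ring
  · rw [pow_succ]
    exact mul_le_of_le_one_right (zero_le) (ENNReal.inv_le_one.2 (by
      exact_mod_cast Nat.one_le_cast.2 (Fact.out : p.Prime).one_lt.le))
  · exact ENNReal.pow_ne_top (ENNReal.inv_ne_top.2 (hpE0 p))

private lemma meas_pball_ofReal (hμ : μ {x : ℚ_[p] | ‖x‖ ≤ 1} = 1) (n : ℕ) :
    μ (PBall p n) = ENNReal.ofReal ((p:ℝ)⁻¹ ^ n) := by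
  rw [meas_pball p μ hμ, ENNReal.ofReal_pow (by positivity),
    ENNReal.ofReal_inv_of_pos (hppos p), ENNReal.ofReal_natCast]

private lemma rpow_term (a : ℝ) (n : ℕ) :
    (((p:ℝ) ^ (-(n:ℤ))) ^ a) * ((p:ℝ)⁻¹)^n = ((p:ℝ) ^ (-(1+a)))^n := by
  have hx0 : (0:ℝ) < p := hppos p
  rw [← Real.rpow_intCast (p:ℝ) (-(n:ℤ)), ← Real.rpow_natCast ((p:ℝ)⁻¹) n,
    ← Real.rpow_natCast ((p:ℝ) ^ (-(1+a))) n, ← Real.rpow_mul hx0.le,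
    Real.inv_rpow hx0.le, ← Real.rpow_neg hx0.le, ← Real.rpow_mul hx0.le,
    ← Real.rpow_add hx0]
  congr 1; push_cast; ring

private lemma cpow_term (s : ℂ) (n : ℕ) :
    ((((p:ℝ) ^ (-(n:ℤ))) : ℝ) : ℂ) ^ s * ((p:ℂ)⁻¹)^n = ((p:ℂ) ^ (-1-s))^n := by
  have hp0 : (p:ℂ) ≠ 0 := by
    exact_mod_cast Nat.cast_ne_zero.2 (Fact.out : p.Prime).ne_zero
  have hbase : ((((p:ℝ) ^ (-(n:ℤ))) : ℝ) : ℂ) = (p:ℂ) ^ (((-(n:ℤ)) : ℤ) : ℂ) := by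
    rw [Complex.cpow_intCast]
    push_cast
    rfl
  have hinv : ((p:ℂ)⁻¹)^n = (p:ℂ) ^ ((((-(n:ℤ)) : ℤ)) : ℂ) := by
    rw [Complex.cpow_intCast, zpow_neg, zpow_natCast, inv_pow]
  have him : (Complex.log (p:ℂ) * (((-(n:ℤ)) : ℤ) : ℂ)).im = 0 := by
    rw [← Complex.natCast_log]
    have : ((((-(n:ℤ)) : ℤ)) : ℂ) = ((((-(n:ℤ)) : ℤ) : ℝ) : ℂ) := by push_cast; ring
    rw [this, ← Complex.ofReal_mul]
    exact Complex.ofReal_im _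
  rw [hbase, hinv, ← Complex.cpow_mul s (by rw [him]; exact neg_neg_of_pos Real.pi_pos)
      (by rw [him]; exact Real.pi_pos.le),
    ← Complex.cpow_nat_mul, ← Complex.cpow_add _ _ hp0]
  congr 1
  push_cast
  ring

private lemma norm_t_lt_one (s : ℂ) (hs : -1 < s.re) : ‖(p:ℂ) ^ (-1-s)‖ < 1 := by
  rw [Complex.norm_natCast_cpow_of_pos (Fact.out : p.Prime).pos]
  apply Real.rpow_lt_one_of_one_lt_of_neg (hp1 p)
  simp only [Complex.sub_re, Complex.neg_re, Complex.one_re]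
  linarith


private lemma ball_ae_union :
    PBall p 0 =ᵐ[μ] (⋃ n, PSph p n) := by
  rw [← pball_zero_diff]
  exact (MeasureTheory.diff_ae_eq_self.2
    (measure_mono_null Set.inter_subset_right (measure_singleton 0))).symm

private lemma integrable_on_ball (hμ : μ {x : ℚ_[p] | ‖x‖ ≤ 1} = 1) (s : ℂ) (hs : -1 < s.re) :
    IntegrableOn (fun y : ℚ_[p] => ((‖y‖ : ℝ) : ℂ) ^ s) (PBall p 0) μ := by
  constructor
  · exact ((measurable_cpow_fn p s).aestronglyMeasurable).restrict
  · rw [hasFiniteIntegral_iff_norm]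
    have : ∫⁻ a in PBall p 0, ENNReal.ofReal ‖((‖a‖ : ℝ) : ℂ) ^ s‖ ∂μ
        = ∫⁻ a in (⋃ n, PSph p n), ENNReal.ofReal ‖((‖a‖ : ℝ) : ℂ) ^ s‖ ∂μ :=
      setLIntegral_congr (ball_ae_union p μ)
    rw [this, lintegral_iUnion (measurableSet_PSph p) (psph_disjoint p)]
    set r : ℝ≥0∞ := ENNReal.ofReal ((p:ℝ) ^ (-(1+s.re))) with hr
    have hr1 : r < 1 := by
      exact ENNReal.ofReal_lt_one.2
        (Real.rpow_lt_one_of_one_lt_of_neg (hp1 p) (by linarith))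
    have hterm : ∀ n, ∫⁻ a in PSph p n, ENNReal.ofReal ‖((‖a‖ : ℝ) : ℂ) ^ s‖ ∂μ ≤ r ^ n := by
      intro n
      have hval : ∀ a ∈ PSph p n,
          ENNReal.ofReal ‖((‖a‖ : ℝ) : ℂ) ^ s‖
          = ENNReal.ofReal (((p:ℝ) ^ (-(n:ℤ))) ^ s.re) := by
        intro a ha
        have haeq : ‖a‖ = (p:ℝ) ^ (-(n:ℤ)) := ha
        have hpos : (0:ℝ) < ‖a‖ := by rw [haeq]; exact zpow_pos (hppos p) _
        rw [Complex.norm_cpow_eq_rpow_re_of_pos hpos, haeq]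
      rw [setLIntegral_congr_fun (measurableSet_PSph p n) hval,
        setLIntegral_const]
      calc ENNReal.ofReal (((p:ℝ) ^ (-(n:ℤ))) ^ s.re) * μ (PSph p n)
          ≤ ENNReal.ofReal (((p:ℝ) ^ (-(n:ℤ))) ^ s.re) * μ (PBall p n) := by
            apply mul_le_mul_right
            apply measure_mono
            rw [psph_eq]
            exact Set.diff_subset
        _ = ENNReal.ofReal (((p:ℝ) ^ (-(n:ℤ))) ^ s.re * ((p:ℝ)⁻¹ ^ n)) := by
            rw [meas_pball_ofReal p μ hμ n, ← ENNReal.ofReal_mul (by positivity)]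
        _ = r ^ n := by
            rw [rpow_term p s.re n, hr, ← ENNReal.ofReal_pow (by positivity)]
    calc ∑' n, ∫⁻ a in PSph p n, ENNReal.ofReal ‖((‖a‖ : ℝ) : ℂ) ^ s‖ ∂μ
        ≤ ∑' n, r ^ n := ENNReal.tsum_le_tsum hterm
      _ = (1 - r)⁻¹ := ENNReal.tsum_geometric r
      _ < ⊤ := ENNReal.inv_lt_top.2 (tsub_pos_of_lt hr1)

private lemma integral_ball (hμ : μ {x : ℚ_[p] | ‖x‖ ≤ 1} = 1) (s : ℂ) (hs : -1 < s.re) :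
    ∫ y in PBall p 0, ((‖y‖ : ℝ) : ℂ) ^ s ∂μ
      = (1 - (p:ℂ)⁻¹) * (1 - (p:ℂ) ^ (-1-s))⁻¹ := by
  rw [setIntegral_congr_set (ball_ae_union p μ)]
  have hsub : (⋃ n, PSph p n) ⊆ PBall p 0 := by
    rw [← pball_zero_diff]; exact Set.diff_subset
  rw [integral_iUnion (measurableSet_PSph p) (psph_disjoint p)
    ((integrable_on_ball p μ hμ s hs).mono_set hsub)]
  have hterm : ∀ n, ∫ y in PSph p n, ((‖y‖ : ℝ) : ℂ) ^ s ∂μ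
      = (1 - (p:ℂ)⁻¹) * ((p:ℂ) ^ (-1-s)) ^ n := by
    intro n
    have hval : Set.EqOn (fun y : ℚ_[p] => ((‖y‖ : ℝ) : ℂ) ^ s)
        (fun _ => ((((p:ℝ) ^ (-(n:ℤ))) : ℝ) : ℂ) ^ s) (PSph p n) := by
      intro a ha
      have haeq : ‖a‖ = (p:ℝ) ^ (-(n:ℤ)) := ha
      simp only [haeq]
    rw [setIntegral_congr_fun (measurableSet_PSph p n) hval, setIntegral_const, measureReal_def,
      meas_psph_toReal p μ hμ n, Complex.real_smul]
    rw [← cpow_term p s n]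
    push_cast
    ring
  rw [tsum_congr hterm, tsum_mul_left,
    tsum_geometric_of_norm_lt_one (norm_t_lt_one p s hs)]

end Aux

/-- Example-2: the local zeta integral of `|1-x|_p^s` over the units `ℤ_p^×`. -/
theorem padic_zeta_integral_units (p : ℕ) [Fact p.Prime]
    [MeasurableSpace ℚ_[p]] [BorelSpace ℚ_[p]]
    (μ : Measure ℚ_[p]) [μ.IsAddHaarMeasure]
    (hμ : μ {x : ℚ_[p] | ‖x‖ ≤ 1} = 1)
    (s : ℂ) (hs : -1 < s.re) :
    ∫ x in {x : ℚ_[p] | ‖x‖ = 1}, (‖1 - x‖ : ℂ) ^ s ∂μ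
      = (p : ℂ) ^ (-1 - s) * (1 - (p : ℂ)⁻¹) / (1 - (p : ℂ) ^ (-1 - s))
        + (p : ℂ)⁻¹ * ((p : ℂ) - 2) := by
  have hpC : (p:ℂ) ≠ 0 := Nat.cast_ne_zero.2 (Fact.out : p.Prime).ne_zero
  have htne : (p:ℂ) ^ (-1-s) ≠ 1 := by
    intro h
    have h2 := norm_t_lt_one p s hs
    rw [h] at h2
    simp at h2
  have hsph_meas : MeasurableSet {x : ℚ_[p] | ‖x‖ = 1} :=
    (isClosed_eq continuous_norm continuous_const).measurableSet
  have hD_meas : MeasurableSet {y : ℚ_[p] | ‖1 - y‖ = 1} :=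
    (isClosed_eq ((continuous_const.sub continuous_id).norm) continuous_const).measurableSet
  have hCmeas : MeasurableSet {y : ℚ_[p] | ‖y - 1‖ ≤ (p:ℝ) ^ (-(1:ℕ):ℤ)} :=
    (isClosed_le ((continuous_id.sub continuous_const).norm) continuous_const).measurableSet
  have hone : ((p:ℝ) ^ (-(0:ℕ):ℤ)) = 1 := by simp
  have hplt : (p:ℝ) ^ (-(1:ℕ):ℤ) < 1 := by
    have := zpow_lt_zpow_right₀ (hp1 p) (by norm_num : (-(1:ℕ):ℤ) < 0)
    rwa [zpow_zero] at this
  have hCsub : {y : ℚ_[p] | ‖y - 1‖ ≤ (p:ℝ) ^ (-(1:ℕ):ℤ)} ⊆ PBall p 0 := by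
    intro y hy
    show ‖y‖ ≤ (p:ℝ) ^ (-(0:ℕ):ℤ)
    rw [hone]
    have h := Padic.nonarchimedean (y - 1) 1
    rw [sub_add_cancel] at h
    refine le_trans h (sup_le (le_trans hy hplt.le) ?_)
    rw [norm_one]
  have hDeq : {y : ℚ_[p] | ‖1 - y‖ = 1}
      = PBall p 0 \ {y : ℚ_[p] | ‖y - 1‖ ≤ (p:ℝ) ^ (-(1:ℕ):ℤ)} := by
    ext y
    simp only [PBall, Set.mem_diff, Set.mem_setOf_eq]
    constructor
    · intro h
      have hsub' : ‖y - 1‖ = 1 := by rw [norm_sub_rev]; exact h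
      constructor
      · rw [hone]
        have hna := Padic.nonarchimedean (y - 1) 1
        rw [sub_add_cancel] at hna
        refine le_trans hna (sup_le ?_ ?_)
        · rw [hsub']
        · rw [norm_one]
      · intro hcon
        rw [hsub'] at hcon
        linarith
    · rintro ⟨h1, h2⟩
      rw [Padic.norm_le_pow_iff_norm_lt_pow_add_one] at h2
      push_neg at h2
      have he : (-(1:ℕ):ℤ) + 1 = 0 := by norm_num
      rw [he, zpow_zero] at h2
      have hle : ‖1 - y‖ ≤ 1 := by
        have hna := Padic.nonarchimedean 1 (-y)
        rw [← sub_eq_add_neg] at hna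
        refine le_trans hna (sup_le norm_one.le ?_)
        rw [norm_neg]
        rw [hone] at h1
        exact h1
      refine le_antisymm hle ?_
      rw [norm_sub_rev] at h2
      exact h2
  have hCval : Set.EqOn (fun y : ℚ_[p] => ((‖y‖ : ℝ) : ℂ) ^ s) (fun _ => (1:ℂ))
      {y : ℚ_[p] | ‖y - 1‖ ≤ (p:ℝ) ^ (-(1:ℕ):ℤ)} := by
    intro y hy
    have hy1 : ‖y - 1‖ ≤ (p:ℝ) ^ (-(1:ℕ):ℤ) := hy
    have hlt : ‖y - 1‖ < 1 := lt_of_le_of_lt hy1 hplt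
    have hynorm : ‖y‖ = 1 := by
      have hyle : ‖y‖ ≤ 1 := by
        have := hCsub hy
        rw [show (y ∈ PBall p 0) = (‖y‖ ≤ (p:ℝ) ^ (-(0:ℕ):ℤ)) from rfl, hone] at this
        exact this
      have hge : (1:ℝ) ≤ max ‖y‖ ‖1 - y‖ := by
        have h := Padic.nonarchimedean y (1 - y)
        rw [show y + (1 - y) = 1 by ring, norm_one] at h
        exact h
      rcases le_max_iff.1 hge with h | h
      · exact le_antisymm hyle h
      · rw [norm_sub_rev] at h; linarith
    simp only [hynorm]
    simp [Complex.one_cpow]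
  have hCint : ∫ y in {y : ℚ_[p] | ‖y - 1‖ ≤ (p:ℝ) ^ (-(1:ℕ):ℤ)},
      ((‖y‖ : ℝ) : ℂ) ^ s ∂μ = (p:ℂ)⁻¹ := by
    rw [setIntegral_congr_fun hCmeas hCval, setIntegral_const]
    have hmC : μ {y : ℚ_[p] | ‖y - 1‖ ≤ (p:ℝ) ^ (-(1:ℕ):ℤ)} = ((p:ℝ≥0∞))⁻¹ := by
      rw [meas_coset p μ 1 1, meas_pball p μ hμ 1, pow_one]
    rw [measureReal_def, hmC, ENNReal.toReal_inv, ENNReal.toReal_natCast, Complex.real_smul]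
    push_cast
    ring
  have hpt : (fun x : ℚ_[p] => Set.indicator {x : ℚ_[p] | ‖x‖ = 1}
        (fun x => ((‖1 - x‖ : ℝ) : ℂ) ^ s) x)
      = fun x => Set.indicator {y : ℚ_[p] | ‖1 - y‖ = 1}
        (fun y => ((‖y‖ : ℝ) : ℂ) ^ s) (1 - x) := by
    funext x
    simp only [Set.indicator_apply, Set.mem_setOf_eq, sub_sub_cancel]
  calc ∫ x in {x : ℚ_[p] | ‖x‖ = 1}, ((‖1 - x‖ : ℝ) : ℂ) ^ s ∂μ
      = ∫ x, Set.indicator {x : ℚ_[p] | ‖x‖ = 1}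
          (fun x => ((‖1 - x‖ : ℝ) : ℂ) ^ s) x ∂μ := (integral_indicator hsph_meas).symm
    _ = ∫ x, Set.indicator {y : ℚ_[p] | ‖1 - y‖ = 1}
          (fun y => ((‖y‖ : ℝ) : ℂ) ^ s) (1 - x) ∂μ := by rw [hpt]
    _ = ∫ x, Set.indicator {y : ℚ_[p] | ‖1 - y‖ = 1}
          (fun y => ((‖y‖ : ℝ) : ℂ) ^ s) x ∂μ := integral_sub_left_eq_self _ μ 1
    _ = ∫ y in {y : ℚ_[p] | ‖1 - y‖ = 1}, ((‖y‖ : ℝ) : ℂ) ^ s ∂μ :=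
          integral_indicator hD_meas
    _ = ∫ y in PBall p 0 \ {y : ℚ_[p] | ‖y - 1‖ ≤ (p:ℝ) ^ (-(1:ℕ):ℤ)},
          ((‖y‖ : ℝ) : ℂ) ^ s ∂μ := by rw [hDeq]
    _ = (∫ y in PBall p 0, ((‖y‖ : ℝ) : ℂ) ^ s ∂μ)
          - ∫ y in {y : ℚ_[p] | ‖y - 1‖ ≤ (p:ℝ) ^ (-(1:ℕ):ℤ)}, ((‖y‖ : ℝ) : ℂ) ^ s ∂μ :=
          integral_diff hCmeas (integrable_on_ball p μ hμ s hs) hCsub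
    _ = (1 - (p:ℂ)⁻¹) * (1 - (p:ℂ) ^ (-1-s))⁻¹ - (p:ℂ)⁻¹ := by
          rw [integral_ball p μ hμ s hs, hCint]
    _ = (p : ℂ) ^ (-1 - s) * (1 - (p : ℂ)⁻¹) / (1 - (p : ℂ) ^ (-1 - s))
        + (p : ℂ)⁻¹ * ((p : ℂ) - 2) := by
          have h1t : 1 - (p:ℂ) ^ (-1-s) ≠ 0 := sub_ne_zero.2 (Ne.symm htne)
          field_simp
          ring
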